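/- Let B_X be the unit ball of a complex Banach space X, F : B_X → closure(D^n) holomorphic with F(z) = a + Σ_{s≥1} P_s(z), P_s(z) = (1/s!) D^s F(0)(z^s), and suppose |a_j| = ‖a‖_∞ for all j ∈ {1,…,n}. Then for ‖z‖ = r ≤ 1/3: Σ_{n≥0} ‖a‖_∞ r^n + Σ_{n≥1} Σ_{k=1}^n r^{k-1} ‖P_{n-k+1}(z)‖_∞ ≤ 1/(1-r). -/

import Mathlib

open Metric Finset

open MeasureTheory intervalIntegral Complex Real

lemma int_exp (m : ℤ) : (∫ t in (0:ℝ)..(2*π), Complex.exp (m * t * Complex.I))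
    = if m = 0 then (2*π : ℂ) else 0 := by
  rcases eq_or_ne m 0 with hm | hm
  · simp [hm]
  · rw [if_neg hm]
    have hc : (m : ℂ) * Complex.I ≠ 0 := by
      simp [Complex.ext_iff, Complex.I_ne_zero, hm]
    have : ∀ t : ℝ, (m : ℂ) * t * Complex.I = ((m : ℂ) * Complex.I) * t := by
      intro t; ring
    simp_rw [this]
    rw [integral_exp_mul_complex hc]
    have h2 : Complex.exp ((m : ℂ) * Complex.I * (2*π:ℝ)) = 1 := by
      rw [show ((m : ℂ) * Complex.I * (2*π:ℝ)) = m * (2 * π * Complex.I) by push_cast; ring]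
      exact Complex.exp_int_mul_two_pi_mul_I m
    rw [h2]
    simp

lemma int_exp' (m : ℤ) : (∫ t in Set.Ioc (0:ℝ) (2*π), Complex.exp (m * t * Complex.I))
    = if m = 0 then (2*π : ℂ) else 0 := by
  rw [← intervalIntegral.integral_of_le (by positivity), int_exp]

lemma norm_term (c : ℂ) (q : ℤ) (t : ℝ) : ‖c * Complex.exp (q * t * Complex.I)‖ = ‖c‖ := by
  have : ((q : ℂ) * t * Complex.I) = ((q * t : ℝ) : ℂ) * Complex.I := by push_cast; ring
  have h1 : ‖Complex.exp (q * t * Complex.I)‖ = 1 := by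
    rw [this]
    exact Complex.norm_exp_ofReal_mul_I _
  rw [norm_mul, h1, mul_one]

lemma coeffInt (d : ℕ → ℂ) (h : ℝ → ℂ)
    (hsum : ∀ t : ℝ, HasSum (fun s : ℕ => d s * Complex.exp (s * t * Complex.I)) (h t))
    (hd : Summable fun s => ‖d s‖) (m : ℤ) :
    (∫ t in Set.Ioc (0:ℝ) (2*π), h t * Complex.exp (-(m:ℂ) * t * Complex.I))
      = (2*π : ℂ) * (if 0 ≤ m then d m.toNat else 0) := by
  have hπ : (0:ℝ) ≤ 2*π := by positivity
  have hcont : ∀ s : ℕ, Continuous (fun t : ℝ => d s * Complex.exp (((s : ℤ) - m : ℤ) * t * Complex.I)) := by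
    intro s
    exact continuous_const.mul (Complex.continuous_exp.comp (by continuity))
  have hint : ∀ s : ℕ, IntegrableOn
      (fun t : ℝ => d s * Complex.exp (((s : ℤ) - m : ℤ) * t * Complex.I)) (Set.Ioc (0:ℝ) (2*π)) :=
    fun s => (hcont s).integrableOn_Ioc
  have hnorm : ∀ s : ℕ, (∫ t in Set.Ioc (0:ℝ) (2*π),
      ‖d s * Complex.exp (((s : ℤ) - m : ℤ) * t * Complex.I)‖) = (2*π) * ‖d s‖ := by
    intro s
    simp_rw [norm_term]
    rw [MeasureTheory.setIntegral_const, smul_eq_mul, measureReal_def, Real.volume_Ioc,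
      ENNReal.toReal_ofReal (by linarith)]
    ring
  have hsum_int : Summable fun s : ℕ => ∫ t in Set.Ioc (0:ℝ) (2*π),
      ‖d s * Complex.exp (((s : ℤ) - m : ℤ) * t * Complex.I)‖ := by
    simp_rw [hnorm]; exact hd.mul_left _
  have key := MeasureTheory.hasSum_integral_of_summable_integral_norm hint hsum_int
  have hpt : ∀ t : ℝ, HasSum (fun s : ℕ => d s * Complex.exp (((s : ℤ) - m : ℤ) * t * Complex.I))
      (h t * Complex.exp (-(m:ℂ) * t * Complex.I)) := by
    intro t
    have h2 := (hsum t).mul_right (Complex.exp (-(m:ℂ) * t * Complex.I))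
    have e : (fun s : ℕ => d s * Complex.exp (s * t * Complex.I) * Complex.exp (-(m:ℂ) * t * Complex.I))
        = fun s : ℕ => d s * Complex.exp (((s : ℤ) - m : ℤ) * t * Complex.I) := by
      funext s
      rw [mul_assoc, ← Complex.exp_add]
      congr 1
      push_cast
      ring
    rw [e] at h2
    exact h2
  have hcongr : (∫ t in Set.Ioc (0:ℝ) (2*π), h t * Complex.exp (-(m:ℂ) * t * Complex.I))
      = ∫ t in Set.Ioc (0:ℝ) (2*π),
        (∑' s : ℕ, d s * Complex.exp (((s : ℤ) - m : ℤ) * t * Complex.I)) :=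
    MeasureTheory.integral_congr_ae (.of_forall fun t => ((hpt t).tsum_eq).symm)
  rw [hcongr, ← key.tsum_eq]
  have hval : ∀ s : ℕ, (∫ t in Set.Ioc (0:ℝ) (2*π),
      d s * Complex.exp (((s : ℤ) - m : ℤ) * t * Complex.I))
      = d s * (if ((s:ℤ) - m) = 0 then (2*π:ℂ) else 0) := by
    intro s
    rw [MeasureTheory.integral_const_mul, int_exp']
  simp_rw [hval]
  rcases le_or_gt 0 m with hm | hm
  · rw [if_pos hm, tsum_eq_single m.toNat]
    · rw [if_pos (by omega), mul_comm]
    · intro s hs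
      rw [if_neg (by omega), mul_zero]
  · rw [if_neg (not_le.mpr hm)]
    have : ∀ s : ℕ, d s * (if ((s:ℤ) - m) = 0 then (2*π:ℂ) else 0) = 0 := by
      intro s; rw [if_neg (by omega), mul_zero]
    simp_rw [this, tsum_zero, mul_zero]

set_option maxHeartbeats 1000000 in
lemma caratheodory (d : ℕ → ℂ) (h : ℝ → ℂ)
    (hsum : ∀ t : ℝ, HasSum (fun s : ℕ => d s * Complex.exp (s * t * Complex.I)) (h t))
    (hd : Summable fun s => ‖d s‖) (hb : ∀ t, ‖h t‖ ≤ 1) (k : ℕ) (hk : 1 ≤ k) :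
    ‖d k‖ ≤ 2 * (1 - ‖d 0‖) := by
  -- continuity of h
  have hh_eq : h = fun t : ℝ => ∑' s : ℕ, d s * Complex.exp (s * t * Complex.I) := by
    funext t; exact ((hsum t).tsum_eq).symm
  have hc : Continuous h := by
    rw [hh_eq]
    apply continuous_tsum (u := fun s => ‖d s‖)
    · intro s; exact continuous_const.mul (Complex.continuous_exp.comp (by continuity))
    · exact hd
    · intro s t
      exact le_of_eq (norm_term (d s) s t)
  -- beta
  set β : ℂ := if d 0 = 0 then 1 else (‖d 0‖ : ℂ) / d 0 with hβ
  have hβ1 : ‖β‖ = 1 := by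
    rw [hβ]
    split_ifs with h0
    · simp
    · rw [norm_div, Complex.norm_real, norm_norm, div_self (norm_ne_zero_iff.mpr h0)]
  have hβ2 : β * d 0 = (‖d 0‖ : ℂ) := by
    rw [hβ]
    split_ifs with h0
    · simp [h0]
    · rw [div_mul_cancel₀ _ h0]
  -- basic integrals
  have Ih0 : (∫ t in Set.Ioc (0:ℝ) (2*π), h t) = (2*π : ℂ) * d 0 := by
    have := coeffInt d h hsum hd 0
    simpa using this
  have Ihk : (∫ t in Set.Ioc (0:ℝ) (2*π), h t * Complex.exp (-(k:ℂ) * t * Complex.I))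
      = (2*π : ℂ) * d k := by
    have := coeffInt d h hsum hd (k : ℤ)
    simpa using this
  have Ihneg : (∫ t in Set.Ioc (0:ℝ) (2*π), h t * Complex.exp ((k:ℂ) * t * Complex.I)) = 0 := by
    have h1 := coeffInt d h hsum hd (-(k : ℤ))
    rw [if_neg (by omega), mul_zero] at h1
    have e2 : ∀ t : ℝ, (-((-(k:ℤ) : ℤ) : ℂ)) * t * Complex.I = (k:ℂ) * t * Complex.I := by
      intro t; push_cast; ring
    simp_rw [e2] at h1
    exact h1
  have Iconj : (∫ t in Set.Ioc (0:ℝ) (2*π),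
      (starRingEnd ℂ) (h t) * Complex.exp (-(k:ℂ) * t * Complex.I)) = 0 := by
    have hptw : ∀ t : ℝ, (starRingEnd ℂ) (h t) * Complex.exp (-(k:ℂ) * t * Complex.I)
        = (starRingEnd ℂ) (h t * Complex.exp ((k:ℂ) * t * Complex.I)) := by
      intro t
      rw [map_mul, ← Complex.exp_conj]
      congr 2
      simp [Complex.ext_iff]
    rw [MeasureTheory.integral_congr_ae (.of_forall hptw), integral_conj, Ihneg, map_zero]
  -- u and v
  set e : ℝ → ℂ := fun t => Complex.exp (-(k:ℂ) * t * Complex.I) with he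
  set u : ℝ → ℂ := fun t => 2 - β * h t - (starRingEnd ℂ) (β * h t) with hu
  set v : ℝ → ℝ := fun t => 2 - 2 * (β * h t).re with hv
  have huv : ∀ t, u t = ((v t : ℝ) : ℂ) := by
    intro t
    rw [hu, hv]
    simp only
    rw [sub_sub, Complex.add_conj]
    push_cast
    ring
  have hv0 : ∀ t, 0 ≤ v t := by
    intro t
    rw [hv]
    simp only
    have : (β * h t).re ≤ 1 := by
      calc (β * h t).re ≤ |(β * h t).re| := le_abs_self _
      _ ≤ ‖β * h t‖ := Complex.abs_re_le_norm _
      _ = ‖β‖ * ‖h t‖ := by rw [norm_mul]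
      _ ≤ 1 := by rw [hβ1, one_mul]; exact hb t
    linarith
  -- integrability
  have hInt : ∀ (g : ℝ → ℂ), Continuous g → IntegrableOn g (Set.Ioc (0:ℝ) (2*π)) :=
    fun g hg => hg.integrableOn_Ioc
  have hce : Continuous e := Complex.continuous_exp.comp (by continuity)
  have hint1 : IntegrableOn (fun t => (2:ℂ) * e t) (Set.Ioc (0:ℝ) (2*π)) :=
    hInt _ (continuous_const.mul hce)
  have hint2 : IntegrableOn (fun t => β * (h t * e t)) (Set.Ioc (0:ℝ) (2*π)) :=
    hInt _ (continuous_const.mul (hc.mul hce))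
  have hint3 : IntegrableOn (fun t => (starRingEnd ℂ) β * ((starRingEnd ℂ) (h t) * e t))
      (Set.Ioc (0:ℝ) (2*π)) :=
    hInt _ (continuous_const.mul ((Complex.continuous_conj.comp hc).mul hce))
  have hint12 : IntegrableOn (fun t => (2:ℂ) * e t - β * (h t * e t)) (Set.Ioc (0:ℝ) (2*π)) :=
    hInt _ ((continuous_const.mul hce).sub (continuous_const.mul (hc.mul hce)))
  have expand : ∀ t, u t * e t
      = ((2:ℂ) * e t - β * (h t * e t)) - (starRingEnd ℂ) β * ((starRingEnd ℂ) (h t) * e t) := by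
    intro t
    rw [hu]
    simp only [map_mul]
    ring
  have Ie : (∫ t in Set.Ioc (0:ℝ) (2*π), e t) = 0 := by
    rw [he]
    have h1 := int_exp' (-(k:ℤ))
    rw [if_neg (by omega)] at h1
    have e2 : ∀ t : ℝ, ((-(k:ℤ) : ℤ) : ℂ) * t * Complex.I = (-(k:ℂ)) * t * Complex.I := by
      intro t; push_cast; ring
    simp_rw [e2] at h1
    exact h1
  -- compute ∫ u e
  have Iue : (∫ t in Set.Ioc (0:ℝ) (2*π), u t * e t) = -(β * ((2*π : ℂ) * d k)) := by
    calc (∫ t in Set.Ioc (0:ℝ) (2*π), u t * e t)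
        = ∫ t in Set.Ioc (0:ℝ) (2*π),
            (((2:ℂ) * e t - β * (h t * e t)) - (starRingEnd ℂ) β * ((starRingEnd ℂ) (h t) * e t)) :=
          MeasureTheory.integral_congr_ae (.of_forall expand)
      _ = (∫ t in Set.Ioc (0:ℝ) (2*π), ((2:ℂ) * e t - β * (h t * e t)))
            - ∫ t in Set.Ioc (0:ℝ) (2*π), (starRingEnd ℂ) β * ((starRingEnd ℂ) (h t) * e t) :=
          MeasureTheory.integral_sub hint12 hint3
      _ = ((∫ t in Set.Ioc (0:ℝ) (2*π), (2:ℂ) * e t)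
            - ∫ t in Set.Ioc (0:ℝ) (2*π), β * (h t * e t))
            - ∫ t in Set.Ioc (0:ℝ) (2*π), (starRingEnd ℂ) β * ((starRingEnd ℂ) (h t) * e t) := by
          rw [MeasureTheory.integral_sub hint1 hint2]
      _ = ((2:ℂ) * ∫ t in Set.Ioc (0:ℝ) (2*π), e t)
            - β * (∫ t in Set.Ioc (0:ℝ) (2*π), h t * e t)
            - (starRingEnd ℂ) β * ∫ t in Set.Ioc (0:ℝ) (2*π), (starRingEnd ℂ) (h t) * e t := by
          rw [MeasureTheory.integral_const_mul, MeasureTheory.integral_const_mul,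
            MeasureTheory.integral_const_mul]
      _ = -(β * ((2*π : ℂ) * d k)) := by
          rw [Ie, he]
          rw [Ihk, Iconj]
          ring
  -- compute ∫ u
  have Iu : (∫ t in Set.Ioc (0:ℝ) (2*π), u t) = ((4*π - 4*π*‖d 0‖ : ℝ) : ℂ) := by
    have i1 : IntegrableOn (fun _ : ℝ => (2:ℂ)) (Set.Ioc (0:ℝ) (2*π)) := hInt _ continuous_const
    have i2 : IntegrableOn (fun t => β * h t) (Set.Ioc (0:ℝ) (2*π)) :=
      hInt _ (continuous_const.mul hc)
    have i3 : IntegrableOn (fun t => (starRingEnd ℂ) β * (starRingEnd ℂ) (h t))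
        (Set.Ioc (0:ℝ) (2*π)) := hInt _ (continuous_const.mul (Complex.continuous_conj.comp hc))
    have i12 : IntegrableOn (fun t => (2:ℂ) - β * h t) (Set.Ioc (0:ℝ) (2*π)) :=
      hInt _ (continuous_const.sub (continuous_const.mul hc))
    have expand2 : ∀ t, u t = ((2:ℂ) - β * h t) - (starRingEnd ℂ) β * (starRingEnd ℂ) (h t) := by
      intro t; rw [hu]; simp only [map_mul]
    calc (∫ t in Set.Ioc (0:ℝ) (2*π), u t)
        = ∫ t in Set.Ioc (0:ℝ) (2*π),
            (((2:ℂ) - β * h t) - (starRingEnd ℂ) β * (starRingEnd ℂ) (h t)) :=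
          MeasureTheory.integral_congr_ae (.of_forall expand2)
      _ = (∫ t in Set.Ioc (0:ℝ) (2*π), ((2:ℂ) - β * h t))
            - ∫ t in Set.Ioc (0:ℝ) (2*π), (starRingEnd ℂ) β * (starRingEnd ℂ) (h t) :=
          MeasureTheory.integral_sub i12 i3
      _ = ((∫ t in Set.Ioc (0:ℝ) (2*π), (2:ℂ))
            - ∫ t in Set.Ioc (0:ℝ) (2*π), β * h t)
            - ∫ t in Set.Ioc (0:ℝ) (2*π), (starRingEnd ℂ) β * (starRingEnd ℂ) (h t) := by
          rw [MeasureTheory.integral_sub i1 i2]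
      _ = ((∫ t in Set.Ioc (0:ℝ) (2*π), (2:ℂ))
            - β * ∫ t in Set.Ioc (0:ℝ) (2*π), h t)
            - (starRingEnd ℂ) β * ∫ t in Set.Ioc (0:ℝ) (2*π), (starRingEnd ℂ) (h t) := by
          rw [MeasureTheory.integral_const_mul, MeasureTheory.integral_const_mul]
      _ = ((4*π - 4*π*‖d 0‖ : ℝ) : ℂ) := by
          rw [integral_conj, Ih0, MeasureTheory.setIntegral_const, measureReal_def, Real.volume_Ioc,
            ENNReal.toReal_ofReal (by nlinarith [Real.pi_pos]), sub_zero, Complex.real_smul]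
          have h5 : β * (2*(π:ℂ)*d 0) = ((2*π*‖d 0‖ : ℝ) : ℂ) := by
            rw [mul_comm β, mul_assoc, mul_comm (d 0), hβ2]
            push_cast
            ring
          rw [h5, ← map_mul, h5, Complex.conj_ofReal]
          push_cast
          ring
  have Iv : (∫ t in Set.Ioc (0:ℝ) (2*π), v t) = 4*π - 4*π*‖d 0‖ := by
    have h1 : ((∫ t in Set.Ioc (0:ℝ) (2*π), v t : ℝ) : ℂ)
        = ∫ t in Set.Ioc (0:ℝ) (2*π), ((v t : ℝ) : ℂ) := integral_ofReal.symm
    rw [MeasureTheory.integral_congr_ae (.of_forall fun t => (huv t).symm), Iu] at h1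
    exact_mod_cast h1
  -- norm bound
  have hbound : ‖∫ t in Set.Ioc (0:ℝ) (2*π), u t * e t‖
      ≤ ∫ t in Set.Ioc (0:ℝ) (2*π), v t := by
    calc ‖∫ t in Set.Ioc (0:ℝ) (2*π), u t * e t‖
        ≤ ∫ t in Set.Ioc (0:ℝ) (2*π), ‖u t * e t‖ :=
          MeasureTheory.norm_integral_le_integral_norm _
      _ = ∫ t in Set.Ioc (0:ℝ) (2*π), v t := by
          apply MeasureTheory.integral_congr_ae (.of_forall fun t => ?_)
          have h2 : ‖u t * e t‖ = ‖u t‖ := by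
            have h3 := norm_term (u t) (-(k:ℤ)) t
            have e2 : ((-(k:ℤ) : ℤ) : ℂ) * t * Complex.I = (-(k:ℂ)) * t * Complex.I := by
              push_cast; ring
            rw [e2] at h3
            rw [he]
            exact h3
          rw [h2, huv t, Complex.norm_real, Real.norm_eq_abs, _root_.abs_of_nonneg (hv0 t)]
  rw [Iue, Iv] at hbound
  have hnn : ‖-(β * ((2*π : ℂ) * d k))‖ = 2*π*‖d k‖ := by
    rw [norm_neg, norm_mul, hβ1, one_mul, norm_mul]
    have h4 : ‖((2*π : ℝ) : ℂ)‖ = 2*π := by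
      rw [Complex.norm_real, Real.norm_eq_abs, _root_.abs_of_nonneg (by positivity)]
    push_cast at h4 ⊢
    rw [h4]
  rw [hnn] at hbound
  nlinarith [Real.pi_pos, norm_nonneg (d k), norm_nonneg (d 0)]

set_option maxHeartbeats 1000000 in
theorem stmt_14 {X : Type*} [NormedAddCommGroup X] [NormedSpace ℂ X] [CompleteSpace X]
    (n : ℕ) (F : X → (Fin n → ℂ)) (a : Fin n → ℂ) (P : ℕ → X → (Fin n → ℂ))
    (hF : DifferentiableOn ℂ F (ball (0 : X) 1))
    (hexp : ∀ z ∈ ball (0 : X) 1, HasSum (fun s : ℕ => P (s + 1) z) (F z - a))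
    (hhom : ∀ s : ℕ, 1 ≤ s → ∀ (c : ℂ) (z : X), P s (c • z) = c ^ s • P s z)
    (hbd : ∀ z ∈ ball (0 : X) 1, ‖F z‖ ≤ 1)
    (ha : ∀ j : Fin n, ‖a j‖ = ‖a‖) :
    ∀ (z : X) (r : ℝ), ‖z‖ = r → r ≤ 1 / 3 →
      (∑' m : ℕ, ‖a‖ * r ^ m)
        + ∑' m : ℕ, ∑ k ∈ range (m + 1), r ^ k * ‖P (m + 1 - k) z‖
      ≤ 1 / (1 - r) := by
  intro z r hz hr
  have hr0 : 0 ≤ r := hz ▸ norm_nonneg z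
  have hr1 : r < 1 := lt_of_le_of_lt hr (by norm_num)
  have h1r : 0 < 1 - r := by linarith
  have hP0 : ∀ s : ℕ, 1 ≤ s → P s (0 : X) = 0 := by
    intro s hs
    have := hhom s hs 0 0
    rw [smul_zero] at this
    rw [this, zero_pow (by omega), zero_smul]
  have hF0 : F 0 = a := by
    have H := hexp 0 (by simp)
    have h2 : ∀ s : ℕ, P (s + 1) (0 : X) = 0 := fun s => hP0 (s+1) (by omega)
    simp_rw [h2] at H
    have h3 := hasSum_zero.unique H
    exact sub_eq_zero.mp h3.symm
  have hA1 : ‖a‖ ≤ 1 := hF0 ▸ hbd 0 (by simp)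
  have hA0 : 0 ≤ ‖a‖ := norm_nonneg a
  have geo : (∑' m : ℕ, ‖a‖ * r ^ m) = ‖a‖ * (1 - r)⁻¹ := by
    rw [tsum_mul_left, tsum_geometric_of_lt_one hr0 hr1]
  rcases eq_or_lt_of_le hr0 with hr0' | hr0'
  · -- r = 0
    have hz0 : z = 0 := by rwa [← norm_eq_zero, hz, eq_comm]
    have hzero : ∀ m : ℕ, (∑ k ∈ range (m + 1), r ^ k * ‖P (m + 1 - k) z‖) = 0 := by
      intro m
      apply Finset.sum_eq_zero
      intro k hk
      rw [hz0, hP0 (m + 1 - k) (by simp at hk; omega), norm_zero, mul_zero]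
    simp_rw [hzero, tsum_zero, add_zero, geo]
    rw [← hr0']
    norm_num
    exact hA1
  -- r > 0 case
  have comp : ∀ (c : ℂ), ‖c‖ * r < 1 → ∀ j : Fin n,
      HasSum (fun m : ℕ => c ^ (m + 1) * (P (m + 1) z) j) (F (c • z) j - a j) := by
    intro c hc j
    have hmem : c • z ∈ ball (0 : X) 1 := by
      rw [mem_ball_zero_iff, norm_smul, hz]; exact hc
    have H := hexp (c • z) hmem
    have H2 : ∀ m : ℕ, P (m + 1) (c • z) = c ^ (m + 1) • P (m + 1) z :=
      fun m => hhom (m + 1) (by omega) c z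
    simp_rw [H2] at H
    have H3 := Pi.hasSum.mp H j
    simpa using H3
  have key : ∀ s : ℕ, 1 ≤ s → ‖P s z‖ ≤ 2 * (1 - ‖a‖) * r ^ s := by
    intro s hs
    have hbndρ : ∀ ρ : ℝ, ρ ∈ Set.Ioo (0:ℝ) 1 → ‖P s z‖ ≤ 2 * (1 - ‖a‖) * (r / ρ) ^ s := by
      intro ρ hρ
      obtain ⟨hρ0, hρ1⟩ := hρ
      rw [pi_norm_le_iff_of_nonneg
        (mul_nonneg (by linarith) (pow_nonneg (by positivity) s))]
      intro j
      set q : ℝ := ρ / r with hq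
      have hq0 : 0 < q := by positivity
      set d : ℕ → ℂ := fun m => if m = 0 then a j else ((q : ℝ) : ℂ) ^ m * (P m z) j with hd
      set h : ℝ → ℂ := fun t => F ((((q : ℝ) : ℂ) * Complex.exp (t * Complex.I)) • z) j with hhh
      have hnorm_c : ∀ t : ℝ, ‖(((q : ℝ) : ℂ) * Complex.exp ((t:ℂ) * Complex.I))‖ = q := by
        intro t
        rw [norm_mul, Complex.norm_real, Real.norm_eq_abs, _root_.abs_of_nonneg hq0.le,
          Complex.norm_exp_ofReal_mul_I, mul_one]
      have hqr : q * r = ρ := by rw [hq]; field_simp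
      have hsum : ∀ t : ℝ, HasSum (fun m : ℕ => d m * Complex.exp (m * t * Complex.I)) (h t) := by
        intro t
        have hc : ‖(((q : ℝ) : ℂ) * Complex.exp ((t:ℂ) * Complex.I))‖ * r < 1 := by
          rw [hnorm_c t, hqr]; exact hρ1
        have H := comp _ hc j
        have He : ∀ m : ℕ, (((q : ℝ) : ℂ) * Complex.exp ((t:ℂ) * Complex.I)) ^ (m + 1)
            * (P (m + 1) z) j = d (m + 1) * Complex.exp (((m + 1 : ℕ) : ℂ) * t * Complex.I) := by
          intro m
          simp only [hd]
          rw [if_neg (show m + 1 ≠ 0 by omega), mul_pow, ← Complex.exp_nat_mul]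
          push_cast
          ring
        simp_rw [He] at H
        rw [← hasSum_nat_add_iff' 1]
        convert H using 2
        case e'_3 => rfl
        rw [Finset.range_one, Finset.sum_singleton]
        simp only [hd]
        simp
      -- summability of coefficients
      set ρ' : ℝ := (1 + ρ) / 2 with hρ'
      have hρ'0 : 0 < ρ' := by rw [hρ']; linarith
      have hρ'1 : ρ' < 1 := by rw [hρ']; linarith
      have hρρ' : ρ < ρ' := by rw [hρ']; linarith
      set q' : ℝ := ρ' / r with hq'
      have hq'0 : 0 < q' := by positivity
      have hc' : ‖((q' : ℝ) : ℂ)‖ * r < 1 := by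
        rw [Complex.norm_real, Real.norm_eq_abs, _root_.abs_of_nonneg hq'0.le, hq']
        field_simp
        exact hρ'1
      have Hsum' := (comp ((q' : ℝ) : ℂ) hc' j).summable
      have htend : Filter.Tendsto (fun m : ℕ => ‖((q' : ℝ) : ℂ) ^ (m+1) * (P (m+1) z) j‖)
          Filter.atTop (nhds 0) := by
        have := Hsum'.tendsto_atTop_zero.norm
        rwa [norm_zero] at this
      obtain ⟨C, hC⟩ := htend.bddAbove_range
      have hCb : ∀ m : ℕ, ‖((q' : ℝ) : ℂ) ^ (m+1) * (P (m+1) z) j‖ ≤ C :=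
        fun m => hC (Set.mem_range_self m)
      have hC0 : 0 ≤ C := le_trans (norm_nonneg _) (hCb 0)
      set x : ℝ := ρ / ρ' with hx
      have hx0 : 0 < x := by positivity
      have hx1 : x < 1 := by rw [hx, div_lt_one hρ'0]; exact hρρ'
      have hdbound : ∀ m : ℕ, ‖d (m+1)‖ ≤ (C * x) * x ^ m := by
        intro m
        have e1 : ‖d (m+1)‖ = q ^ (m+1) * ‖(P (m+1) z) j‖ := by
          simp only [hd]
          rw [if_neg (show m + 1 ≠ 0 by omega), norm_mul, norm_pow, Complex.norm_real,
            Real.norm_eq_abs, _root_.abs_of_nonneg hq0.le]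
        have e2 : ‖((q' : ℝ) : ℂ) ^ (m+1) * (P (m+1) z) j‖ = q' ^ (m+1) * ‖(P (m+1) z) j‖ := by
          rw [norm_mul, norm_pow, Complex.norm_real, Real.norm_eq_abs,
            _root_.abs_of_nonneg hq'0.le]
        have e3 : q ^ (m+1) = x ^ (m+1) * q' ^ (m+1) := by
          rw [← mul_pow]
          congr 1
          rw [hx, hq, hq']
          field_simp
        rw [e1, e3, mul_assoc]
        calc x ^ (m+1) * (q' ^ (m+1) * ‖(P (m+1) z) j‖)
            ≤ x ^ (m+1) * C := by
              apply mul_le_mul_of_nonneg_left _ (pow_nonneg hx0.le _)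
              rw [← e2]; exact hCb m
          _ = (C * x) * x ^ m := by rw [pow_succ]; ring
      have hdsum : Summable (fun m : ℕ => ‖d m‖) := by
        rw [← summable_nat_add_iff 1]
        apply Summable.of_nonneg_of_le (fun m => norm_nonneg _) hdbound
        exact (summable_geometric_of_lt_one hx0.le hx1).mul_left _
      have hb : ∀ t : ℝ, ‖h t‖ ≤ 1 := by
        intro t
        simp only [hhh]
        have hmem : (((q : ℝ) : ℂ) * Complex.exp ((t:ℂ) * Complex.I)) • z ∈ ball (0 : X) 1 := by
          rw [mem_ball_zero_iff, norm_smul, hz, hnorm_c t, hqr]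
          exact hρ1
        exact le_trans (norm_le_pi_norm _ j) (hbd _ hmem)
      have hcar := caratheodory d h hsum hdsum hb s hs
      have hd0 : ‖d 0‖ = ‖a‖ := by
        simp only [hd, if_true]
        exact ha j
      have hds : ‖d s‖ = q ^ s * ‖(P s z) j‖ := by
        simp only [hd]
        rw [if_neg (show s ≠ 0 by omega), norm_mul, norm_pow, Complex.norm_real,
          Real.norm_eq_abs, _root_.abs_of_nonneg hq0.le]
      rw [hds, hd0] at hcar
      have hrρq : (r / ρ) = q⁻¹ := by rw [hq, inv_div]
      rw [hrρq, inv_pow, ← div_eq_mul_inv, le_div_iff₀ (pow_pos hq0 s)]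
      rw [mul_comm] at hcar
      exact hcar
    -- take the limit ρ → 1⁻
    have htend : Filter.Tendsto (fun ρ : ℝ => 2 * (1 - ‖a‖) * (r / ρ) ^ s)
        (nhdsWithin 1 (Set.Iio 1)) (nhds (2 * (1 - ‖a‖) * r ^ s)) := by
      have hca : ContinuousAt (fun ρ : ℝ => 2 * (1 - ‖a‖) * (r / ρ) ^ s) 1 :=
        (continuousAt_const.mul ((continuousAt_const.div continuousAt_id one_ne_zero).pow s))
      have h8 := hca.tendsto.mono_left (nhdsWithin_le_nhds (s := Set.Iio (1:ℝ)))
      simpa using h8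
    refine ge_of_tendsto htend ?_
    filter_upwards [Ioo_mem_nhdsLT_of_mem (Set.mem_Ioc.mpr ⟨zero_lt_one, le_refl (1:ℝ)⟩)]
      with ρ hρ using hbndρ ρ hρ
  -- final arithmetic
  have hsummand : ∀ m : ℕ, (∑ k ∈ range (m + 1), r ^ k * ‖P (m + 1 - k) z‖)
      ≤ 2 * (1 - ‖a‖) * ((m+1 : ℕ) * r ^ (m+1)) := by
    intro m
    calc (∑ k ∈ range (m + 1), r ^ k * ‖P (m + 1 - k) z‖)
        ≤ ∑ k ∈ range (m + 1), 2 * (1 - ‖a‖) * r ^ (m+1) := by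
          apply Finset.sum_le_sum
          intro k hk
          have hk' : k ≤ m := by simp at hk; omega
          calc r ^ k * ‖P (m + 1 - k) z‖
              ≤ r ^ k * (2 * (1 - ‖a‖) * r ^ (m + 1 - k)) := by
                apply mul_le_mul_of_nonneg_left (key (m+1-k) (by omega)) (pow_nonneg hr0 k)
            _ = 2 * (1 - ‖a‖) * r ^ (m+1) := by
                have hpw : r ^ k * r ^ (m + 1 - k) = r ^ (m+1) := by
                  rw [← pow_add]
                  congr 1
                  omega
                calc r ^ k * (2 * (1 - ‖a‖) * r ^ (m + 1 - k))
                    = 2 * (1 - ‖a‖) * (r ^ k * r ^ (m + 1 - k)) := by ring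
                  _ = 2 * (1 - ‖a‖) * r ^ (m+1) := by rw [hpw]
      _ = 2 * (1 - ‖a‖) * ((m+1 : ℕ) * r ^ (m+1)) := by
          rw [Finset.sum_const, Finset.card_range, nsmul_eq_mul]
          push_cast
          ring
  have hrnorm : ‖r‖ < 1 := by rwa [Real.norm_eq_abs, _root_.abs_of_nonneg hr0]
  have hsummable_nr : Summable (fun m : ℕ => ((m : ℕ) : ℝ) * r ^ m) := by
    have := summable_pow_mul_geometric_of_norm_lt_one (R := ℝ) 1 hrnorm
    simpa using this
  have hsummable_bnd : Summable (fun m : ℕ => 2 * (1 - ‖a‖) * (((m+1 : ℕ) : ℝ) * r ^ (m+1))) := by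
    apply Summable.mul_left
    exact (summable_nat_add_iff 1).mpr hsummable_nr
  have hT : (∑' m : ℕ, ∑ k ∈ range (m + 1), r ^ k * ‖P (m + 1 - k) z‖)
      ≤ 2 * (1 - ‖a‖) * (r / (1-r)^2) := by
    have hLsummable : Summable (fun m : ℕ => ∑ k ∈ range (m + 1), r ^ k * ‖P (m + 1 - k) z‖) := by
      apply Summable.of_nonneg_of_le _ hsummand hsummable_bnd
      intro m
      apply Finset.sum_nonneg
      intro k _
      positivity
    calc (∑' m : ℕ, ∑ k ∈ range (m + 1), r ^ k * ‖P (m + 1 - k) z‖)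
        ≤ ∑' m : ℕ, 2 * (1 - ‖a‖) * (((m+1 : ℕ) : ℝ) * r ^ (m+1)) :=
          Summable.tsum_le_tsum hsummand hLsummable hsummable_bnd
      _ = 2 * (1 - ‖a‖) * (∑' m : ℕ, ((m+1 : ℕ) : ℝ) * r ^ (m+1)) := tsum_mul_left
      _ = 2 * (1 - ‖a‖) * (r / (1-r)^2) := by
          congr 1
          have h7 := tsum_coe_mul_geometric_of_norm_lt_one (𝕜 := ℝ) hrnorm
          rw [Summable.tsum_eq_zero_add hsummable_nr] at h7
          simpa using h7
  rw [geo]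
  have heq : 1/(1-r) - (‖a‖ * (1-r)⁻¹ + 2 * (1 - ‖a‖) * (r / (1-r)^2))
      = (1 - ‖a‖) * (1 - 3*r) / (1-r)^2 := by
    field_simp
    ring
  have hge : 0 ≤ (1 - ‖a‖) * (1 - 3*r) / (1-r)^2 :=
    div_nonneg (mul_nonneg (by linarith) (by linarith)) (by positivity)
  linarith [hT, heq, hge]
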